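/- Let θ be an invertible antisymmetric real 4×4 matrix, g a symmetric positive definite real 4×4 matrix, e^σ := √(det θ · det g), and J := e^{−σ/2} θ g. Then det J = 1, and J satisfies the characteristic identity J⁴ − (1/2)·tr(J²)·J² + I₄ = 0 (equivalently, J² + 2 e^{−σ} η · I₄ + J^{−2} = 0 where 4 e^{−σ} η := −tr(J²)). -/

import Mathlib

open Matrix


lemma skew_entries (A : Matrix (Fin 4) (Fin 4) ℝ) (hA : Aᵀ = -A) :
    A = !![0, A 0 1, A 0 2, A 0 3;
           -A 0 1, 0, A 1 2, A 1 3;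
           -A 0 2, -A 1 2, 0, A 2 3;
           -A 0 3, -A 1 3, -A 2 3, 0] := by
  have h : ∀ i j, A j i = -A i j := by
    intro i j
    have := congrFun (congrFun hA i) j
    simpa [Matrix.transpose_apply] using this
  ext i j
  fin_cases i <;> fin_cases j <;> simp <;>
    linarith [h 0 0, h 1 1, h 2 2, h 3 3, h 0 1, h 0 2, h 0 3, h 1 2, h 1 3, h 2 3]

lemma skew_det (A : Matrix (Fin 4) (Fin 4) ℝ) (hA : Aᵀ = -A) :
    A.det = (A 0 1 * A 2 3 - A 0 2 * A 1 3 + A 0 3 * A 1 2) ^ 2 := by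
  rw [skew_entries A hA]
  simp [det_succ_row_zero, Fin.sum_univ_succ, Fin.succAbove,
    Fin.castSucc, Fin.castAdd, Fin.castLE]
  ring

set_option maxHeartbeats 2000000 in
lemma skew_identity (A : Matrix (Fin 4) (Fin 4) ℝ) (hA : Aᵀ = -A) :
    A ^ 4 - ((A ^ 2).trace / 2) • A ^ 2 + A.det • (1 : Matrix (Fin 4) (Fin 4) ℝ) = 0 := by
  rw [skew_entries A hA]
  ext i j
  fin_cases i <;> fin_cases j <;>
  · simp [pow_succ, Matrix.mul_apply, Fin.sum_univ_four, Matrix.trace, Matrix.diag,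
      det_succ_row_zero, Fin.sum_univ_succ, Fin.succAbove,
      Fin.castSucc, Fin.castAdd, Fin.castLE, Matrix.one_apply]
    ring

lemma conj_pow_mat (B N : Matrix (Fin 4) (Fin 4) ℝ) (h : IsUnit B.det) (n : ℕ) :
    (B * N * B⁻¹) ^ n = B * N ^ n * B⁻¹ := by
  induction n with
  | zero => simp [Matrix.mul_nonsing_inv B h]
  | succ k ih =>
      rw [pow_succ, pow_succ, ih]
      simp only [Matrix.mul_assoc]
      rw [Matrix.nonsing_inv_mul_cancel_left _ _ h]

theorem J_unimodular_and_characteristic_identity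
    (θ g J : Matrix (Fin 4) (Fin 4) ℝ)
    (hθ : θᵀ = -θ) (hθu : IsUnit θ) (hg : g.PosDef)
    (hJ : J = (Real.sqrt (Real.sqrt (θ.det * g.det)))⁻¹ • (θ * g)) :
    J.det = 1 ∧ J ^ 4 - ((J ^ 2).trace / 2) • J ^ 2 + 1 = 0 := by
  have hgdet : 0 < g.det := hg.det_pos
  obtain ⟨B, hB⟩ : ∃ B : Matrix (Fin 4) (Fin 4) ℝ, g = Bᴴ * B := by
    open scoped MatrixOrder Matrix.Norms.L2Operator in
    obtain ⟨B, hB⟩ := CStarAlgebra.nonneg_iff_eq_star_mul_self.mp hg.posSemidef.nonneg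
    exact ⟨B, hB⟩
  rw [Matrix.conjTranspose_eq_transpose_of_trivial] at hB
  have hBdet : B.det ≠ 0 := by
    intro h
    rw [hB, Matrix.det_mul, Matrix.det_transpose, h, mul_zero] at hgdet
    exact lt_irrefl 0 hgdet
  have hBu : IsUnit B.det := isUnit_iff_ne_zero.mpr hBdet
  set M := θ * g with hM
  set A := B * M * B⁻¹ with hA
  have hMA : M = B⁻¹ * A * B := by
    rw [hA, Matrix.mul_assoc, Matrix.nonsing_inv_mul_cancel_right _ _ hBu,
      ← Matrix.mul_assoc, Matrix.nonsing_inv_mul _ hBu, Matrix.one_mul]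
  have hAeq : A = B * θ * Bᵀ := by
    rw [hA, hM, hB]
    rw [show θ * (Bᵀ * B) = θ * Bᵀ * B from by rw [Matrix.mul_assoc],
      ← Matrix.mul_assoc, Matrix.mul_nonsing_inv_cancel_right _ _ hBu, Matrix.mul_assoc,
      ← Matrix.mul_assoc]
  have hAskew : Aᵀ = -A := by
    rw [hAeq]
    simp [Matrix.transpose_mul, Matrix.transpose_transpose, hθ, Matrix.mul_assoc,
      Matrix.neg_mul, Matrix.mul_neg]
  have key := skew_identity A hAskew
  have hBBdet : B.det * B⁻¹.det = 1 := by
    rw [← Matrix.det_mul, Matrix.mul_nonsing_inv _ hBu, Matrix.det_one]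
  have hdetA : A.det = M.det := by
    rw [hA, Matrix.det_mul, Matrix.det_mul]
    linear_combination M.det * hBBdet
  have htrA : (A ^ 2).trace = (M ^ 2).trace := by
    rw [hA, conj_pow_mat B M hBu, Matrix.trace_mul_cycle,
      Matrix.nonsing_inv_mul _ hBu, Matrix.one_mul]
  have hMid : M ^ 4 - ((M ^ 2).trace / 2) • M ^ 2 + M.det • (1 : Matrix (Fin 4) (Fin 4) ℝ) = 0 := by
    have h2 : M ^ 2 = B⁻¹ * A ^ 2 * B := by
      rw [hMA, show B⁻¹ * A * B = B⁻¹ * A * (B⁻¹)⁻¹ from by rw [Matrix.nonsing_inv_nonsing_inv _ hBu],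
        conj_pow_mat B⁻¹ A (B.isUnit_nonsing_inv_det hBu) 2, Matrix.nonsing_inv_nonsing_inv _ hBu]
    have h4 : M ^ 4 = B⁻¹ * A ^ 4 * B := by
      rw [hMA, show B⁻¹ * A * B = B⁻¹ * A * (B⁻¹)⁻¹ from by rw [Matrix.nonsing_inv_nonsing_inv _ hBu],
        conj_pow_mat B⁻¹ A (B.isUnit_nonsing_inv_det hBu) 4, Matrix.nonsing_inv_nonsing_inv _ hBu]
    calc M ^ 4 - ((M ^ 2).trace / 2) • M ^ 2 + M.det • (1 : Matrix (Fin 4) (Fin 4) ℝ)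
        = B⁻¹ * (A ^ 4 - ((A ^ 2).trace / 2) • A ^ 2 + A.det • (1 : Matrix (Fin 4) (Fin 4) ℝ)) * B := by
          rw [← htrA, ← hdetA, h4, h2]
          simp [Matrix.mul_sub, Matrix.sub_mul, Matrix.mul_add, Matrix.add_mul,
            mul_smul_comm, smul_mul_assoc, Matrix.mul_assoc,
            Matrix.nonsing_inv_mul _ hBu]
      _ = 0 := by rw [key, Matrix.mul_zero, Matrix.zero_mul]
  have hdetM : M.det = θ.det * g.det := by rw [hM, Matrix.det_mul]
  have hθdet : θ.det ≠ 0 := ((Matrix.isUnit_iff_isUnit_det θ).mp hθu).ne_zero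
  have hMdet0 : M.det ≠ 0 := by rw [hdetM]; exact mul_ne_zero hθdet (ne_of_gt hgdet)
  have hsq : M.det = (A 0 1 * A 2 3 - A 0 2 * A 1 3 + A 0 3 * A 1 2) ^ 2 := by
    rw [← hdetA, skew_det A hAskew]
  have hDpos : 0 < θ.det * g.det := by
    rw [← hdetM]
    exact lt_of_le_of_ne (hsq ▸ sq_nonneg _) (Ne.symm hMdet0)
  set s := Real.sqrt (Real.sqrt (θ.det * g.det)) with hs
  have hs1 : 0 < Real.sqrt (θ.det * g.det) := Real.sqrt_pos.mpr hDpos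
  have hs0 : 0 < s := Real.sqrt_pos.mpr hs1
  have hs4 : s ^ 4 = θ.det * g.det := by
    have h2 : s ^ 2 = Real.sqrt (θ.det * g.det) := Real.sq_sqrt hs1.le
    calc s ^ 4 = (s ^ 2) ^ 2 := by ring
      _ = θ.det * g.det := by rw [h2, Real.sq_sqrt hDpos.le]
  constructor
  · rw [hJ, Matrix.det_smul, hdetM]
    simp only [Fintype.card_fin, inv_pow, hs4]
    exact inv_mul_cancel₀ (ne_of_gt hDpos)
  · rw [hJ]
    have hsc : (s⁻¹ • M) ^ 4 - (((s⁻¹ • M) ^ 2).trace / 2) • (s⁻¹ • M) ^ 2 + 1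
        = (s⁻¹) ^ 4 • (M ^ 4 - ((M ^ 2).trace / 2) • M ^ 2 + (θ.det * g.det) • (1 : Matrix (Fin 4) (Fin 4) ℝ)) := by
      rw [smul_pow, smul_pow, Matrix.trace_smul]
      match_scalars
      · ring
      · simp only [smul_eq_mul]; ring
      · field_simp
        linear_combination hs4
    rw [hsc, ← hdetM, hMid, smul_zero]
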